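/- Given staircase data, let S be any subset of the middle staircase generators {f₁,…,f_{r−1}}, say S = {f_{k₁},…,f_{k_m}} with 0 < k₁ < ⋯ < k_m < r, and set A = {f₀, f_r} ∪ S. Then Ideal.span A is the defining ideal of an ACM set of points of ℙ¹×ℙ¹; explicitly Ideal.span A = I_Y where Y = {Aᵢ×Bⱼ : 1 ≤ i ≤ t_r, 1 ≤ j ≤ α′ᵢ} with α′ᵢ = s_r for 0 < i ≤ t_{k₁}, α′ᵢ = s_{r−k_l} for t_{k_l} < i ≤ t_{k_{l+1}} (1 ≤ l ≤ m−1), and α′ᵢ = s_{r−k_m} for t_{k_m} < i ≤ t_r (when S = ∅, Y is the full grid {Aᵢ×Bⱼ : 1 ≤ i ≤ t_r, 1 ≤ j ≤ s_r}). -/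

import Mathlib

/- Common setup: R = ℂ[x₀,x₁,y₀,y₁] as MvPolynomial (Fin 4) ℂ with
   x₀ = X 0, x₁ = X 1, y₀ = X 2, y₁ = X 3.
   `Hf a` is the horizontal form a₁x₀ - a₀x₁ of the point a = [a₀:a₁] ∈ ℙ¹;
   `Vf b` is the vertical form b₁y₀ - b₀y₁;
   `cross a b ≠ 0` says the (nonzero) pairs a, b are non-proportional,
   i.e. define distinct points of ℙ¹. -/

open MvPolynomial

noncomputable section

abbrev R : Type := MvPolynomial (Fin 4) ℂ

def Hf (a : ℂ × ℂ) : R := C a.2 * X 0 - C a.1 * X 1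

def Vf (b : ℂ × ℂ) : R := C b.2 * X 2 - C b.1 * X 3

def cross (a b : ℂ × ℂ) : ℂ := a.1 * b.2 - a.2 * b.1

/-- The defining ideal of the point P = A×B of ℙ¹×ℙ¹. -/
def Ipt (P : (ℂ × ℂ) × (ℂ × ℂ)) : Ideal R := Ideal.span {Hf P.1, Vf P.2}

/-- The defining ideal of a finite set of points (I_∅ = R = ⊤). -/
def Ipts (X : Finset ((ℂ × ℂ) × (ℂ × ℂ))) : Ideal R := X.inf Ipt

/-- The defining ideal of a set of points (I_∅ = R = ⊤). -/
def IptsSet (W : Set ((ℂ × ℂ) × (ℂ × ℂ))) : Ideal R := ⨅ P ∈ W, Ipt P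

/-- Bihomogeneous: homogeneous separately in x₀,x₁ and in y₀,y₁. -/
def Bihom (f : R) : Prop :=
  ∃ a b : ℕ, IsWeightedHomogeneous (![1,1,0,0] : Fin 4 → ℕ) f a ∧
    IsWeightedHomogeneous (![0,0,1,1] : Fin 4 → ℕ) f b

/-- `G` minimally generates `I`. -/
def MinGen (G : Finset R) (I : Ideal R) : Prop :=
  Ideal.span (G : Set R) = I ∧ ∀ g ∈ G, Ideal.span ((G : Set R) \ {g}) ≠ I

/-- Staircase data: r ≥ 1, 0 = t₀ < t₁ < ⋯ < t_r, 0 = s₀ < s₁ < ⋯ < s_r,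
    pairwise distinct points A₁,…,A_{t_r} of ℙ¹ and pairwise distinct points
    B₁,…,B_{s_r} of ℙ¹ (all indexed starting at 1). -/
structure Staircase where
  r : ℕ
  t : ℕ → ℕ
  s : ℕ → ℕ
  A : ℕ → ℂ × ℂ
  B : ℕ → ℂ × ℂ
  hr : 1 ≤ r
  ht0 : t 0 = 0
  hs0 : s 0 = 0
  ht : ∀ k, k < r → t k < t (k + 1)
  hs : ∀ k, k < r → s k < s (k + 1)
  hA0 : ∀ i ∈ Finset.Icc 1 (t r), A i ≠ 0
  hB0 : ∀ j ∈ Finset.Icc 1 (s r), B j ≠ 0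
  hAd : ∀ i ∈ Finset.Icc 1 (t r), ∀ i' ∈ Finset.Icc 1 (t r), i ≠ i' → cross (A i) (A i') ≠ 0
  hBd : ∀ j ∈ Finset.Icc 1 (s r), ∀ j' ∈ Finset.Icc 1 (s r), j ≠ j' → cross (B j) (B j') ≠ 0

/-- The staircase generator f_k = H₁⋯H_{t_k} · V₁⋯V_{s_{r-k}}. -/
def stairGen (S : Staircase) (k : ℕ) : R :=
  (∏ i ∈ Finset.Icc 1 (S.t k), Hf (S.A i)) * ∏ j ∈ Finset.Icc 1 (S.s (S.r - k)), Vf (S.B j)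

/-! ### Auxiliary lemmas -/

section Aux

/-- The evaluation map at the point, into ℂ[u,v]. -/
def ptmap (a b : ℂ × ℂ) : R →ₐ[ℂ] MvPolynomial (Fin 2) ℂ :=
  aeval ![C a.1 * X 0, C a.2 * X 0, C b.1 * X 1, C b.2 * X 1]

lemma ptmap_X0 (a b : ℂ × ℂ) : ptmap a b (X 0) = C a.1 * X 0 := by
  simp [ptmap]
lemma ptmap_X1 (a b : ℂ × ℂ) : ptmap a b (X 1) = C a.2 * X 0 := by
  simp [ptmap]
lemma ptmap_X2 (a b : ℂ × ℂ) : ptmap a b (X 2) = C b.1 * X 1 := by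
  simp [ptmap]
lemma ptmap_X3 (a b : ℂ × ℂ) : ptmap a b (X 3) = C b.2 * X 1 := by
  simp [ptmap]

lemma ptmap_Hf (a b a' : ℂ × ℂ) :
    ptmap a b (Hf a') = C (-cross a' a) * X 0 := by
  simp only [Hf, map_sub, map_mul, ptmap_X0, ptmap_X1, cross,
    show ∀ c : ℂ, ptmap a b (C c) = C c from fun c => by
      rw [show (C c : R) = algebraMap ℂ R c from rfl, AlgHom.commutes]; rfl]
  rw [map_neg, map_sub, map_mul, map_mul]
  ring

lemma ptmap_Vf (a b b' : ℂ × ℂ) :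
    ptmap a b (Vf b') = C (-cross b' b) * X 1 := by
  simp only [Vf, map_sub, map_mul, ptmap_X2, ptmap_X3, cross,
    show ∀ c : ℂ, ptmap a b (C c) = C c from fun c => by
      rw [show (C c : R) = algebraMap ℂ R c from rfl, AlgHom.commutes]; rfl]
  rw [map_neg, map_sub, map_mul, map_mul]
  ring

lemma exists_inv (a : ℂ × ℂ) (ha : a ≠ 0) : ∃ z : ℂ × ℂ, z.1 * a.1 + z.2 * a.2 = 1 := by
  by_cases h1 : a.1 = 0
  · have h2 : a.2 ≠ 0 := by
      intro h2; exact ha (Prod.ext h1 h2)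
    exact ⟨(0, a.2⁻¹), by field_simp; ring⟩
  · exact ⟨(a.1⁻¹, 0), by field_simp; ring⟩

lemma Ipt_eq_ker (a b : ℂ × ℂ) (ha : a ≠ 0) (hb : b ≠ 0) :
    Ipt (a, b) = RingHom.ker (ptmap a b) := by
  obtain ⟨z, hz⟩ := exists_inv a ha
  obtain ⟨w, hw⟩ := exists_inv b hb
  apply le_antisymm
  · rw [Ipt, Ideal.span_le]
    rintro f (rfl | rfl)
    · simp only [SetLike.mem_coe, RingHom.mem_ker, ptmap_Hf]
      rw [show cross a a = 0 by simp [cross]; ring]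
      simp
    · simp only [SetLike.mem_coe, RingHom.mem_ker, ptmap_Vf]
      rw [show cross b b = 0 by simp [cross]; ring]
      simp
  · -- build the inverse map to the quotient
    set I : Ideal R := Ipt (a, b) with hI
    have hH : Hf a ∈ I := Ideal.subset_span (by left; rfl)
    have hV : Vf b ∈ I := Ideal.subset_span (by right; rfl)
    set u' : R := C z.1 * X 0 + C z.2 * X 1 with hu'
    set v' : R := C w.1 * X 2 + C w.2 * X 3 with hv'
    set ψ : MvPolynomial (Fin 2) ℂ →ₐ[ℂ] R ⧸ I :=
      aeval ![Ideal.Quotient.mk I u', Ideal.Quotient.mk I v'] with hψ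
    have key : ∀ f : R, ψ (ptmap a b f) = Ideal.Quotient.mk I f := by
      have hcomp : ψ.comp (ptmap a b) = Ideal.Quotient.mkₐ ℂ I := by
        apply MvPolynomial.algHom_ext
        intro i
        fin_cases i
        · show ψ (ptmap a b (X 0)) = Ideal.Quotient.mk I (X 0)
          rw [ptmap_X0]
          simp only [hψ, map_mul, aeval_C, aeval_X]
          rw [show (![Ideal.Quotient.mk I u', Ideal.Quotient.mk I v'] : Fin 2 → R ⧸ I) 0
              = Ideal.Quotient.mk I u' from rfl]
          rw [show (algebraMap ℂ (R ⧸ I)) a.1 = Ideal.Quotient.mk I (C a.1) from rfl,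
            ← map_mul]
          rw [Ideal.Quotient.mk_eq_mk_iff_sub_mem]
          have : C a.1 * u' - X 0 = C (-z.2) * Hf a
              + C (z.1 * a.1 + z.2 * a.2 - 1) * X 0 := by
            rw [hu', Hf, map_neg, map_sub, map_add, map_mul, map_mul, map_one]
            ring
          rw [this, hz, sub_self, map_zero, zero_mul, add_zero]
          exact I.mul_mem_left _ hH
        · show ψ (ptmap a b (X 1)) = Ideal.Quotient.mk I (X 1)
          rw [ptmap_X1]
          simp only [hψ, map_mul, aeval_C, aeval_X]
          rw [show (![Ideal.Quotient.mk I u', Ideal.Quotient.mk I v'] : Fin 2 → R ⧸ I) 0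
              = Ideal.Quotient.mk I u' from rfl]
          rw [show (algebraMap ℂ (R ⧸ I)) a.2 = Ideal.Quotient.mk I (C a.2) from rfl,
            ← map_mul]
          rw [Ideal.Quotient.mk_eq_mk_iff_sub_mem]
          have : C a.2 * u' - X 1 = C z.1 * Hf a
              + C (z.1 * a.1 + z.2 * a.2 - 1) * X 1 := by
            rw [hu', Hf, map_sub, map_add, map_mul, map_mul, map_one]
            ring
          rw [this, hz, sub_self, map_zero, zero_mul, add_zero]
          exact I.mul_mem_left _ hH
        · show ψ (ptmap a b (X 2)) = Ideal.Quotient.mk I (X 2)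
          rw [ptmap_X2]
          simp only [hψ, map_mul, aeval_C, aeval_X]
          rw [show (![Ideal.Quotient.mk I u', Ideal.Quotient.mk I v'] : Fin 2 → R ⧸ I) 1
              = Ideal.Quotient.mk I v' from rfl]
          rw [show (algebraMap ℂ (R ⧸ I)) b.1 = Ideal.Quotient.mk I (C b.1) from rfl,
            ← map_mul]
          rw [Ideal.Quotient.mk_eq_mk_iff_sub_mem]
          have : C b.1 * v' - X 2 = C (-w.2) * Vf b
              + C (w.1 * b.1 + w.2 * b.2 - 1) * X 2 := by
            rw [hv', Vf, map_neg, map_sub, map_add, map_mul, map_mul, map_one]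
            ring
          rw [this, hw, sub_self, map_zero, zero_mul, add_zero]
          exact I.mul_mem_left _ hV
        · show ψ (ptmap a b (X 3)) = Ideal.Quotient.mk I (X 3)
          rw [ptmap_X3]
          simp only [hψ, map_mul, aeval_C, aeval_X]
          rw [show (![Ideal.Quotient.mk I u', Ideal.Quotient.mk I v'] : Fin 2 → R ⧸ I) 1
              = Ideal.Quotient.mk I v' from rfl]
          rw [show (algebraMap ℂ (R ⧸ I)) b.2 = Ideal.Quotient.mk I (C b.2) from rfl,
            ← map_mul]
          rw [Ideal.Quotient.mk_eq_mk_iff_sub_mem]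
          have : C b.2 * v' - X 3 = C w.1 * Vf b
              + C (w.1 * b.1 + w.2 * b.2 - 1) * X 3 := by
            rw [hv', Vf, map_sub, map_add, map_mul, map_mul, map_one]
            ring
          rw [this, hw, sub_self, map_zero, zero_mul, add_zero]
          exact I.mul_mem_left _ hV
      intro f
      have := congrArg (fun g => g f) hcomp
      simpa using this
    intro f hf
    rw [RingHom.mem_ker] at hf
    have := key f
    rw [hf, map_zero] at this
    exact Ideal.Quotient.eq_zero_iff_mem.mp this.symm

lemma Ipt_isPrime (a b : ℂ × ℂ) (ha : a ≠ 0) (hb : b ≠ 0) : (Ipt (a, b)).IsPrime := by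
  rw [Ipt_eq_ker a b ha hb]
  exact RingHom.ker_isPrime _

lemma Hf_not_mem (a b a' : ℂ × ℂ) (ha : a ≠ 0) (hb : b ≠ 0) (h : cross a' a ≠ 0) :
    Hf a' ∉ Ipt (a, b) := by
  rw [Ipt_eq_ker a b ha hb, RingHom.mem_ker, ptmap_Hf]
  exact mul_ne_zero (C_ne_zero.mpr (neg_ne_zero.mpr h)) (X_ne_zero 0)

lemma Vf_not_mem (a b b' : ℂ × ℂ) (ha : a ≠ 0) (hb : b ≠ 0) (h : cross b' b ≠ 0) :
    Vf b' ∉ Ipt (a, b) := by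
  rw [Ipt_eq_ker a b ha hb, RingHom.mem_ker, ptmap_Vf]
  exact mul_ne_zero (C_ne_zero.mpr (neg_ne_zero.mpr h)) (X_ne_zero 1)

/-- The fundamental splitting lemma. -/
lemma FL {I : Ideal R} {P Q : R} (hQ : Q ∈ I) (hP : ∀ f, P * f ∈ I → f ∈ I) :
    Ideal.span {P, Q} ⊓ I = Ideal.span {Q} ⊔ Ideal.span {P} * I := by
  apply le_antisymm
  · rintro x ⟨hx1, hx2⟩
    obtain ⟨u, v, huv⟩ := Ideal.mem_span_pair.mp hx1
    have hvQ : v * Q ∈ I := I.mul_mem_left v hQ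
    have huP : P * u ∈ I := by
      rw [mul_comm]
      have : u * P = x - v * Q := by rw [← huv]; ring
      rw [this]
      exact Submodule.sub_mem _ hx2 hvQ
    have hu : u ∈ I := hP u huP
    have h1 : u * P ∈ Ideal.span {P} * I := by
      rw [mul_comm u P]
      exact Ideal.mul_mem_mul (Ideal.mem_span_singleton_self P) hu
    have h2 : v * Q ∈ Ideal.span {Q} :=
      Ideal.mem_span_singleton.mpr (Dvd.intro_left v rfl)
    rw [← huv]
    exact Submodule.add_mem _ (Ideal.mem_sup_right h1) (Ideal.mem_sup_left h2)
  · apply sup_le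
    · apply le_inf
      · exact Ideal.span_mono (by intro x hx; right; exact hx)
      · rw [Ideal.span_le]
        intro x hx
        rw [Set.mem_singleton_iff] at hx
        subst hx; exact hQ
    · exact le_inf (le_trans Ideal.mul_le_left
        (Ideal.span_mono (by intro x hx; left; exact hx))) Ideal.mul_le_right

lemma span_mul_image (P : R) (s : Set R) :
    Ideal.span ((fun x => P * x) '' s) = Ideal.span {P} * Ideal.span s := by
  apply le_antisymm
  · rw [Ideal.span_le]
    rintro _ ⟨x, hx, rfl⟩
    exact Ideal.mul_mem_mul (Ideal.subset_span rfl) (Ideal.subset_span hx)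
  · rw [Ideal.mul_le]
    intro r hr t ht
    obtain ⟨c, rfl⟩ := Ideal.mem_span_singleton.mp hr
    have key : ∀ t ∈ Ideal.span s, P * t ∈ Ideal.span ((fun x => P * x) '' s) := by
      intro t ht
      refine Submodule.span_induction ?_ ?_ ?_ ?_ ht
      · intro x hx; exact Ideal.subset_span ⟨x, hx, rfl⟩
      · simp
      · intro x y _ _ hpx hpy; rw [mul_add]; exact Submodule.add_mem _ hpx hpy
      · intro d x _ hpx
        rw [smul_eq_mul, show P * (d * x) = d * (P * x) by ring]
        exact Ideal.mul_mem_left _ d hpx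
    have := key t ht
    have h2 : P * c * t = c * (P * t) := by ring
    rw [h2]
    exact Ideal.mul_mem_left _ c this

lemma prod_nzd {ι : Type*} {J : Ideal R} (hJ : J.IsPrime) {s : Finset ι} {g : ι → R}
    (h : ∀ i ∈ s, g i ∉ J) : ∀ f, (∏ i ∈ s, g i) * f ∈ J → f ∈ J := by
  classical
  induction s using Finset.induction_on with
  | empty => intro f hf; simpa using hf
  | insert _ _ hnot ih =>
    rename_i a s'
    intro f hf
    rw [Finset.prod_insert hnot, mul_assoc] at hf
    rcases hJ.mem_or_mem hf with h1 | h2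
    · exact absurd h1 (h a (Finset.mem_insert_self a s'))
    · exact ih (fun i hi => h i (Finset.mem_insert_of_mem hi)) f h2

lemma mono_succ (u : ℕ → ℕ) (N : ℕ) (h : ∀ l, l < N → u l < u (l + 1)) :
    ∀ a b, a ≤ b → b ≤ N → u a ≤ u b := by
  intro a b
  induction b with
  | zero =>
    intro hab _
    have : a = 0 := by omega
    subst this; exact le_rfl
  | succ n ih =>
    intro hab hbN
    rcases Nat.eq_or_lt_of_le hab with rfl | h'
    · exact le_rfl
    · exact le_trans (ih (by omega) (by omega)) (le_of_lt (h n (by omega)))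

lemma find_block (u : ℕ → ℕ) (h0 : u 0 = 0) :
    ∀ n i, 0 < i → i ≤ u (n + 1) → ∃ l, l ≤ n ∧ u l < i ∧ i ≤ u (l + 1) := by
  intro n
  induction n with
  | zero => intro i hi hle; exact ⟨0, le_rfl, by omega, hle⟩
  | succ n ih =>
    intro i hi hle
    by_cases hc : i ≤ u (n + 1)
    · obtain ⟨l, hl, h1, h2⟩ := ih i hi hc
      exact ⟨l, by omega, h1, h2⟩
    · exact ⟨n + 1, le_rfl, by omega, hle⟩

/-- One column is a complete intersection. -/
lemma col_eq (a : ℂ × ℂ) (ha : a ≠ 0) (B : ℕ → ℂ × ℂ) (n : ℕ)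
    (hB0 : ∀ j ∈ Finset.Icc 1 n, B j ≠ 0)
    (hBd : ∀ j ∈ Finset.Icc 1 n, ∀ j' ∈ Finset.Icc 1 n, j ≠ j' → cross (B j) (B j') ≠ 0) :
    Ideal.span {Hf a, ∏ j ∈ Finset.Icc 1 n, Vf (B j)} =
      ⨅ j ∈ Finset.Icc 1 n, Ipt (a, B j) := by
  induction n with
  | zero =>
    simp only [show Finset.Icc 1 0 = (∅ : Finset ℕ) by rfl, Finset.prod_empty]
    rw [show (⨅ j ∈ (∅ : Finset ℕ), Ipt (a, B j)) = ⊤ by simp, Ideal.eq_top_iff_one]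
    exact Ideal.subset_span (by right; rfl)
  | succ n ih =>
    have hins : Finset.Icc 1 (n + 1) = insert (n + 1) (Finset.Icc 1 n) := by
      ext j; simp only [Finset.mem_Icc, Finset.mem_insert]; omega
    have hsub : ∀ j ∈ Finset.Icc 1 n, j ∈ Finset.Icc 1 (n + 1) := by
      intro j hj; simp only [Finset.mem_Icc] at *; omega
    have ih' := ih (fun j hj => hB0 j (hsub j hj))
      (fun j hj j' hj' hne => hBd j (hsub j hj) j' (hsub j' hj') hne)
    have hnotmem : (n + 1) ∉ Finset.Icc 1 n := by simp
    rw [hins, Finset.prod_insert hnotmem, Finset.iInf_insert]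
    have hIpt : Ipt (a, B (n + 1)) = Ideal.span {Vf (B (n + 1)), Hf a} := by
      rw [Ipt, Set.pair_comm]
    have hmem1 : (n + 1) ∈ Finset.Icc 1 (n + 1) := by simp
    have hQ : Hf a ∈ Ideal.span ({Hf a, ∏ j ∈ Finset.Icc 1 n, Vf (B j)} : Set R) :=
      Ideal.subset_span (by left; rfl)
    have hP : ∀ f, Vf (B (n + 1)) * f ∈
        Ideal.span ({Hf a, ∏ j ∈ Finset.Icc 1 n, Vf (B j)} : Set R) →
        f ∈ Ideal.span ({Hf a, ∏ j ∈ Finset.Icc 1 n, Vf (B j)} : Set R) := by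
      intro f hf
      rw [ih'] at hf ⊢
      simp only [Ideal.mem_iInf] at hf ⊢
      intro j hj
      have hprime : (Ipt (a, B j)).IsPrime :=
        Ipt_isPrime a (B j) ha (hB0 j (hsub j hj))
      have hnel : Vf (B (n + 1)) ∉ Ipt (a, B j) := by
        apply Vf_not_mem a (B j) (B (n + 1)) ha (hB0 j (hsub j hj))
        apply hBd (n + 1) hmem1 j (hsub j hj)
        simp only [Finset.mem_Icc] at hj; omega
      exact (hprime.mem_or_mem (hf j hj)).resolve_left hnel
    have := FL hQ hP
    rw [hIpt, ← ih', this, ← span_mul_image, Set.image_pair, ← Ideal.span_union]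
    apply le_antisymm
    · rw [Ideal.span_le]
      rintro x (rfl | rfl)
      · exact Ideal.subset_span (by left; rfl)
      · exact Ideal.subset_span (by right; right; rfl)
    · rw [Ideal.span_le]
      rintro x (rfl | (rfl | rfl))
      · exact Ideal.subset_span (by left; rfl)
      · exact Ideal.mul_mem_left _ _ (Ideal.subset_span (by left; rfl))
      · exact Ideal.subset_span (by right; rfl)

/-- A grid is a complete intersection. -/
lemma grid_eq (A : ℕ → ℂ × ℂ) (B : ℕ → ℂ × ℂ) (T : Finset ℕ) (n : ℕ)
    (hA0 : ∀ i ∈ T, A i ≠ 0)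
    (hAd : ∀ i ∈ T, ∀ i' ∈ T, i ≠ i' → cross (A i) (A i') ≠ 0)
    (hB0 : ∀ j ∈ Finset.Icc 1 n, B j ≠ 0)
    (hBd : ∀ j ∈ Finset.Icc 1 n, ∀ j' ∈ Finset.Icc 1 n, j ≠ j' → cross (B j) (B j') ≠ 0) :
    Ideal.span {∏ i ∈ T, Hf (A i), ∏ j ∈ Finset.Icc 1 n, Vf (B j)} =
      ⨅ i ∈ T, ⨅ j ∈ Finset.Icc 1 n, Ipt (A i, B j) := by
  classical
  induction T using Finset.induction_on with
  | empty =>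
    simp only [Finset.prod_empty]
    rw [show (⨅ i ∈ (∅ : Finset ℕ), ⨅ j ∈ Finset.Icc 1 n, Ipt (A i, B j)) = ⊤ by simp,
      Ideal.eq_top_iff_one]
    exact Ideal.subset_span (by left; rfl)
  | insert _ _ hnot ih =>
    rename_i i0 T'
    have hsub : ∀ i ∈ T', i ∈ insert i0 T' := fun i hi => Finset.mem_insert_of_mem hi
    have hmemi0 : i0 ∈ insert i0 T' := Finset.mem_insert_self i0 T'
    have ih' := ih (fun i hi => hA0 i (hsub i hi))
      (fun i hi i' hi' hne => hAd i (hsub i hi) i' (hsub i' hi') hne)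
    rw [Finset.prod_insert hnot, Finset.iInf_insert]
    rw [← col_eq (A i0) (hA0 i0 hmemi0) B n hB0 hBd]
    set Q : R := ∏ j ∈ Finset.Icc 1 n, Vf (B j) with hQdef
    set P' : R := ∏ i ∈ T', Hf (A i) with hP'def
    have hQ : Q ∈ Ideal.span ({P', Q} : Set R) := Ideal.subset_span (by right; rfl)
    have hP : ∀ f, Hf (A i0) * f ∈ Ideal.span ({P', Q} : Set R) →
        f ∈ Ideal.span ({P', Q} : Set R) := by
      intro f hf
      rw [ih'] at hf ⊢
      simp only [Ideal.mem_iInf] at hf ⊢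
      intro i hi j hj
      have hprime : (Ipt (A i, B j)).IsPrime :=
        Ipt_isPrime (A i) (B j) (hA0 i (hsub i hi)) (hB0 j hj)
      have hnel : Hf (A i0) ∉ Ipt (A i, B j) := by
        apply Hf_not_mem (A i) (B j) (A i0) (hA0 i (hsub i hi)) (hB0 j hj)
        apply hAd i0 hmemi0 i (hsub i hi)
        intro heq; exact hnot (heq ▸ hi)
      exact (hprime.mem_or_mem (hf i hi j hj)).resolve_left hnel
    have := FL hQ hP
    rw [← ih', this, ← span_mul_image, Set.image_pair, ← Ideal.span_union]
    apply le_antisymm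
    · rw [Ideal.span_le]
      rintro x (rfl | rfl)
      · exact Ideal.subset_span (by right; left; rfl)
      · exact Ideal.subset_span (by left; rfl)
    · rw [Ideal.span_le]
      rintro x (rfl | (rfl | rfl))
      · exact Ideal.subset_span (by right; rfl)
      · exact Ideal.subset_span (by left; rfl)
      · exact Ideal.mul_mem_left _ _ (Ideal.subset_span (by right; rfl))

/-- Relative staircase generators. -/
def gen (S : Staircase) (k : ℕ → ℕ) (l l' : ℕ) : R :=
  (∏ i ∈ Finset.Ioc (S.t (k l)) (S.t (k l')), Hf (S.A i)) *
    ∏ j ∈ Finset.Icc 1 (S.s (S.r - k l')), Vf (S.B j)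

lemma main_claim (S : Staircase) (m : ℕ) (k : ℕ → ℕ) (hk0 : k 0 = 0)
    (hkm : k (m + 1) = S.r) (hkmono : ∀ l, l ≤ m → k l < k (l + 1)) :
    ∀ d l, l + d = m + 1 →
    Ideal.span ((fun l' => gen S k l l') '' Set.Icc l (m + 1)) =
      ⨅ l' ∈ Finset.Icc l m, ⨅ i ∈ Finset.Ioc (S.t (k l')) (S.t (k (l' + 1))),
        ⨅ j ∈ Finset.Icc 1 (S.s (S.r - k l')), Ipt (S.A i, S.B j) := by
  have hkm' : ∀ a b, a ≤ b → b ≤ m + 1 → k a ≤ k b :=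
    mono_succ k (m + 1) (fun l hl => hkmono l (by omega))
  have hkle : ∀ l, l ≤ m + 1 → k l ≤ S.r := fun l hl => hkm ▸ hkm' l (m + 1) hl le_rfl
  have htm : ∀ a b, a ≤ b → b ≤ S.r → S.t a ≤ S.t b := mono_succ S.t S.r S.ht
  have hsm : ∀ a b, a ≤ b → b ≤ S.r → S.s a ≤ S.s b := mono_succ S.s S.r S.hs
  have hrow : ∀ l'', l'' ≤ m → ∀ i ∈ Finset.Ioc (S.t (k l'')) (S.t (k (l'' + 1))),
      i ∈ Finset.Icc 1 (S.t S.r) := by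
    intro l'' hl'' i hi
    rw [Finset.mem_Ioc] at hi
    rw [Finset.mem_Icc]
    refine ⟨by omega, le_trans hi.2 (htm _ _ (hkle (l'' + 1) (by omega)) le_rfl)⟩
  have hcol : ∀ l'', ∀ j ∈ Finset.Icc 1 (S.s (S.r - k l'')), j ∈ Finset.Icc 1 (S.s S.r) := by
    intro l'' j hj
    rw [Finset.mem_Icc] at hj
    rw [Finset.mem_Icc]
    exact ⟨hj.1, le_trans hj.2 (hsm _ _ (Nat.sub_le _ _) le_rfl)⟩
  intro d
  induction d with
  | zero =>
    intro l hl
    have hl' : l = m + 1 := by omega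
    subst hl'
    have h1 : gen S k (m + 1) (m + 1) = 1 := by
      rw [gen, Finset.Ioc_self, Finset.prod_empty, hkm, Nat.sub_self, S.hs0]
      rw [show Finset.Icc 1 0 = (∅ : Finset ℕ) from rfl, Finset.prod_empty, one_mul]
    rw [Set.Icc_self, Set.image_singleton, h1, Ideal.span_singleton_one,
      Finset.Icc_eq_empty (by omega)]
    simp
  | succ d ih =>
    intro l hl
    have hlm : l ≤ m := by omega
    have ih' := ih (l + 1) (by omega)
    have hgrid := grid_eq S.A S.B (Finset.Ioc (S.t (k l)) (S.t (k (l + 1))))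
      (S.s (S.r - k l))
      (fun i hi => S.hA0 i (hrow l hlm i hi))
      (fun i hi i' hi' hne => S.hAd i (hrow l hlm i hi) i' (hrow l hlm i' hi') hne)
      (fun j hj => S.hB0 j (hcol l j hj))
      (fun j hj j' hj' hne => S.hBd j (hcol l j hj) j' (hcol l j' hj') hne)
    have hQ : (∏ j ∈ Finset.Icc 1 (S.s (S.r - k l)), Vf (S.B j)) ∈
        ⨅ l' ∈ Finset.Icc (l + 1) m, ⨅ i ∈ Finset.Ioc (S.t (k l')) (S.t (k (l' + 1))),
          ⨅ j ∈ Finset.Icc 1 (S.s (S.r - k l')), Ipt (S.A i, S.B j) := by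
      simp only [Ideal.mem_iInf]
      intro l' hl' i hi j hj
      rw [Finset.mem_Icc] at hl'
      rw [Finset.mem_Icc] at hj
      have hjmem : j ∈ Finset.Icc 1 (S.s (S.r - k l)) := by
        rw [Finset.mem_Icc]
        refine ⟨hj.1, le_trans hj.2 (hsm _ _ ?_ (Nat.sub_le _ _))⟩
        have : k l ≤ k l' := hkm' l l' (by omega) (by omega)
        omega
      obtain ⟨c, hc⟩ := Finset.dvd_prod_of_mem (fun j => Vf (S.B j)) hjmem
      rw [hc]
      exact Ideal.mul_mem_right _ _ (Ideal.subset_span (Set.mem_insert_of_mem _ rfl))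
    have hP : ∀ f, (∏ i ∈ Finset.Ioc (S.t (k l)) (S.t (k (l + 1))), Hf (S.A i)) * f ∈
        (⨅ l' ∈ Finset.Icc (l + 1) m, ⨅ i ∈ Finset.Ioc (S.t (k l')) (S.t (k (l' + 1))),
          ⨅ j ∈ Finset.Icc 1 (S.s (S.r - k l')), Ipt (S.A i, S.B j)) →
        f ∈ ⨅ l' ∈ Finset.Icc (l + 1) m, ⨅ i ∈ Finset.Ioc (S.t (k l')) (S.t (k (l' + 1))),
          ⨅ j ∈ Finset.Icc 1 (S.s (S.r - k l')), Ipt (S.A i, S.B j) := by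
      intro f hf
      simp only [Ideal.mem_iInf] at hf ⊢
      intro l' hl' i hi j hj
      have hl'' : l' ∈ Finset.Icc (l + 1) m := hl'
      rw [Finset.mem_Icc] at hl''
      have hl'm : l' ≤ m := hl''.2
      refine prod_nzd (Ipt_isPrime _ _ (S.hA0 i (hrow l' hl'm i hi))
        (S.hB0 j (hcol l' j hj))) ?_ f (hf l' hl' i hi j hj)
      intro i0 hi0
      have hne : i0 ≠ i := by
        rw [Finset.mem_Ioc] at hi0 hi
        have h2 : S.t (k (l + 1)) ≤ S.t (k l') :=
          htm _ _ (hkm' (l + 1) l' (by omega) (by omega)) (hkle l' (by omega))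
        omega
      exact Hf_not_mem _ _ _ (S.hA0 i (hrow l' hl'm i hi)) (S.hB0 j (hcol l' j hj))
        (S.hAd i0 (hrow l hlm i0 hi0) i (hrow l' hl'm i hi) hne)
    have hIccSet : Set.Icc l (m + 1) = insert l (Set.Icc (l + 1) (m + 1)) := by
      ext x; simp only [Set.mem_Icc, Set.mem_insert_iff]; omega
    have hIccFin : Finset.Icc l m = insert l (Finset.Icc (l + 1) m) := by
      ext x; simp only [Finset.mem_Icc, Finset.mem_insert]; omega
    have hgenll : gen S k l l = ∏ j ∈ Finset.Icc 1 (S.s (S.r - k l)), Vf (S.B j) := by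
      rw [gen, Finset.Ioc_self, Finset.prod_empty, one_mul]
    have himg : (fun l' => gen S k l l') '' Set.Icc (l + 1) (m + 1) =
        (fun x => (∏ i ∈ Finset.Ioc (S.t (k l)) (S.t (k (l + 1))), Hf (S.A i)) * x) ''
          ((fun l' => gen S k (l + 1) l') '' Set.Icc (l + 1) (m + 1)) := by
      rw [Set.image_image]
      apply Set.image_congr
      intro l' hl'
      rw [Set.mem_Icc] at hl'
      have h1 : S.t (k l) ≤ S.t (k (l + 1)) :=
        htm _ _ (le_of_lt (hkmono l hlm)) (hkle (l + 1) (by omega))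
      have h2 : S.t (k (l + 1)) ≤ S.t (k l') :=
        htm _ _ (hkm' (l + 1) l' hl'.1 hl'.2) (hkle l' hl'.2)
      rw [gen, gen, ← Finset.prod_Ioc_consecutive _ h1 h2, mul_assoc]
    rw [hIccSet, Set.image_insert_eq, Ideal.span_insert, hgenll, himg, span_mul_image,
      ih', hIccFin, Finset.iInf_insert, ← hgrid, FL hQ hP]

end Aux

/-- Theorem 3.5 (in staircase form): for any subset S = {f_{k₁},…,f_{k_m}} of the
middle staircase generators (encoded by k with k 0 = 0 < k 1 < ⋯ < k m < k (m+1) = r),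
the ideal generated by A = {f₀, f_r} ∪ S is the defining ideal of the ACM set of points
{Aᵢ×Bⱼ : 1 ≤ i ≤ t_r, 1 ≤ j ≤ α′ᵢ} with α′ᵢ = s_{r - k_l} for t_{k_l} < i ≤ t_{k_{l+1}}. -/
theorem statement8 (S : Staircase) (m : ℕ) (k : ℕ → ℕ)
    (hk0 : k 0 = 0) (hkm : k (m + 1) = S.r)
    (hkmono : ∀ l, l ≤ m → k l < k (l + 1))
    (α' : ℕ → ℕ)
    (hα' : ∀ l, l ≤ m → ∀ i, S.t (k l) < i → i ≤ S.t (k (l + 1)) →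
      α' i = S.s (S.r - k l)) :
    Ideal.span ({stairGen S 0, stairGen S S.r} ∪
        (fun l => stairGen S (k l)) '' Set.Icc 1 m) =
      ⨅ i ∈ Finset.Icc 1 (S.t S.r), ⨅ j ∈ Finset.Icc 1 (α' i), Ipt (S.A i, S.B j) := by
  have hkm' : ∀ a b, a ≤ b → b ≤ m + 1 → k a ≤ k b :=
    mono_succ k (m + 1) (fun l hl => hkmono l (by omega))
  have hkle : ∀ l, l ≤ m + 1 → k l ≤ S.r := fun l hl => hkm ▸ hkm' l (m + 1) hl le_rfl
  have htm : ∀ a b, a ≤ b → b ≤ S.r → S.t a ≤ S.t b := mono_succ S.t S.r S.ht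
  -- the generating set is the image of `gen S k 0`
  have hgen0 : ∀ l', gen S k 0 l' = stairGen S (k l') := by
    intro l'
    rw [gen, stairGen, hk0, S.ht0]
    have : Finset.Ioc 0 (S.t (k l')) = Finset.Icc 1 (S.t (k l')) := by
      ext x; simp only [Finset.mem_Icc, Finset.mem_Ioc]; omega
    rw [this]
  have hsets : ({stairGen S 0, stairGen S S.r} ∪
      (fun l => stairGen S (k l)) '' Set.Icc 1 m : Set R) =
      (fun l' => gen S k 0 l') '' Set.Icc 0 (m + 1) := by
    ext x
    simp only [Set.mem_union, Set.mem_insert_iff, Set.mem_singleton_iff, Set.mem_image,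
      Set.mem_Icc, hgen0]
    constructor
    · rintro ((rfl | rfl) | ⟨l, ⟨h1, h2⟩, rfl⟩)
      · exact ⟨0, ⟨le_rfl, by omega⟩, by rw [hk0]⟩
      · exact ⟨m + 1, ⟨by omega, le_rfl⟩, by rw [hkm]⟩
      · exact ⟨l, ⟨by omega, by omega⟩, rfl⟩
    · rintro ⟨l, ⟨h1, h2⟩, rfl⟩
      by_cases h0 : l = 0
      · subst h0; left; left; rw [hk0]
      · by_cases hm1 : l = m + 1
        · subst hm1; left; right; rw [hkm]
        · right; exact ⟨l, ⟨by omega, by omega⟩, rfl⟩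
  -- partition of the rows into blocks
  have hpart : Finset.Icc 1 (S.t S.r) =
      (Finset.Icc 0 m).biUnion (fun l' => Finset.Ioc (S.t (k l')) (S.t (k (l' + 1)))) := by
    ext i
    simp only [Finset.mem_Icc, Finset.mem_biUnion, Finset.mem_Ioc]
    constructor
    · rintro ⟨h1, h2⟩
      obtain ⟨l', hl', ha, hb⟩ := find_block (fun l' => S.t (k l'))
        (by simp only [hk0, S.ht0]) m i (by omega)
        (by show i ≤ S.t (k (m + 1)); rw [hkm]; exact h2)
      exact ⟨l', ⟨Nat.zero_le _, hl'⟩, ha, hb⟩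
    · rintro ⟨l', ⟨_, hl'⟩, ha, hb⟩
      refine ⟨by omega, le_trans hb ?_⟩
      rw [← hkm]
      exact htm _ _ (hkm' (l' + 1) (m + 1) (by omega) le_rfl) (hkle (m + 1) le_rfl)
  have hRHS : (Finset.Icc 1 (S.t S.r)).inf
      (fun i => (Finset.Icc 1 (α' i)).inf (fun j => Ipt (S.A i, S.B j))) =
      (Finset.Icc 0 m).inf (fun l' => (Finset.Ioc (S.t (k l')) (S.t (k (l' + 1)))).inf
        (fun i => (Finset.Icc 1 (S.s (S.r - k l'))).inf (fun j => Ipt (S.A i, S.B j)))) := by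
    rw [hpart, Finset.inf_biUnion]
    apply Finset.inf_congr rfl
    intro l' hl'
    apply Finset.inf_congr rfl
    intro i hi
    rw [Finset.mem_Icc] at hl'
    rw [Finset.mem_Ioc] at hi
    rw [hα' l' hl'.2 i hi.1 hi.2]
  simp only [Finset.inf_eq_iInf] at hRHS
  rw [hsets]
  rw [show Ideal.span ((fun l' => gen S k 0 l') '' Set.Icc 0 (m + 1)) =
    ⨅ l' ∈ Finset.Icc 0 m, ⨅ i ∈ Finset.Ioc (S.t (k l')) (S.t (k (l' + 1))),
      ⨅ j ∈ Finset.Icc 1 (S.s (S.r - k l')), Ipt (S.A i, S.B j) from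
    main_claim S m k hk0 hkm hkmono (m + 1) 0 (by omega)]
  exact hRHS.symm
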